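/- Let a, b be integers with a ≥ b > 1 and ab ≥ 5. Let W be the subgroup of GL₂(ℤ) generated by w₁ = [[−1, b],[0,1]] and w₂ = [[1,0],[a,−1]] (acting on column vectors in the basis of simple roots α₁ = (1,0), α₂ = (0,1)), and let Δ^re = W·α₁ ∪ W·α₂ be the set of real roots. Then for any α, β ∈ Δ^re, α + β ∉ Δ^re. -/

import Mathlib

def RL (a b x y : ℤ) : Prop :=
  (a*x^2 - a*b*x*y + b*y^2 = a ∧ a ∣ y) ∨
  (a*x^2 - a*b*x*y + b*y^2 = b ∧ (a ∣ y - 1 ∨ a ∣ y + 1))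


lemma RL.w1 {a b x y : ℤ} (h : RL a b x y) : RL a b (b*y - x) y := by
  rcases h with ⟨h, hd⟩ | ⟨h, hd⟩
  · exact Or.inl ⟨by linear_combination h, hd⟩
  · exact Or.inr ⟨by linear_combination h, hd⟩

lemma RL.w2 {a b x y : ℤ} (h : RL a b x y) : RL a b x (a*x - y) := by
  rcases h with ⟨h, hd⟩ | ⟨h, hd⟩
  · exact Or.inl ⟨by linear_combination h, (dvd_mul_right a x).sub hd⟩
  · refine Or.inr ⟨by linear_combination h, ?_⟩
    rcases hd with hd | hd
    · refine Or.inr ?_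
      have := (dvd_mul_right a x).sub hd
      rwa [show a*x - (y - 1) = a*x - y + 1 from by ring] at this
    · refine Or.inl ?_
      have := (dvd_mul_right a x).sub hd
      rwa [show a*x - (y + 1) = a*x - y - 1 from by ring] at this

set_option maxHeartbeats 1600000 in
lemma rl_key (a b : ℤ) (hab : a ≥ b) (hb : 1 < b) (h5 : a * b ≥ 5)
    (x₁ y₁ x₂ y₂ : ℤ) (hα : RL a b x₁ y₁) (hβ : RL a b x₂ y₂)
    (hγ : RL a b (x₁ + x₂) (y₁ + y₂)) : False := by
  have ha2 : 2 ≤ a := by linarith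
  have hb2 : 2 ≤ b := by linarith
  have hI : ((a*(x₁+x₂)^2 - a*b*(x₁+x₂)*(y₁+y₂) + b*(y₁+y₂)^2)
        - (a*x₁^2 - a*b*x₁*y₁ + b*y₁^2) - (a*x₂^2 - a*b*x₂*y₂ + b*y₂^2))^2
      - 4*(a*x₁^2 - a*b*x₁*y₁ + b*y₁^2)*(a*x₂^2 - a*b*x₂*y₂ + b*y₂^2)
      = a*b*(a*b-4)*(x₁*y₂ - x₂*y₁)^2 := by ring
  by_cases hD : x₁*y₂ - x₂*y₁ = 0
  · rw [hD] at hI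
    have hy0 : ∀ y : ℤ, (a ∣ y - 1 ∨ a ∣ y + 1) → y ≠ 0 := by
      rintro y (h | h) rfl
      · have h' : a ∣ 1 := by simpa using (dvd_neg).mp (by simpa using h)
        have := Int.le_of_dvd one_pos h'; linarith
      · have h' : a ∣ 1 := by simpa using h
        have := Int.le_of_dvd one_pos h'; linarith
    have hle2 : ¬ (a ∣ 2) := by
      intro h; have := Int.le_of_dvd (by norm_num) h; nlinarith
    rcases hα with ⟨e1, d1⟩ | ⟨e1, d1⟩ <;> rcases hβ with ⟨e2, d2⟩ | ⟨e2, d2⟩ <;>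
        rcases hγ with ⟨e3, d3⟩ | ⟨e3, d3⟩ <;> rw [e1, e2, e3] at hI
    · nlinarith [hI]
    · nlinarith [hI]
    · nlinarith [hI]
    · -- (a, b, b): a = 4b
      have ha4 : a = 4 * b := by nlinarith [hI]
      have hy2 : y₂ ≠ 0 := hy0 _ d2
      have hy1 : y₁ ≠ 0 := by
        rintro rfl
        have hx1 : x₁ = 0 := by
          rcases mul_eq_zero.mp (by linear_combination hD : x₁ * y₂ = 0) with h | h
          · exact h
          · exact absurd h hy2
        rw [hx1] at e1; norm_num at e1; linarith
      have hpar : y₂^2 * a = y₁^2 * b := by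
        linear_combination (-(y₂^2)) * e1 + y₁^2 * e2 +
          (a*(x₁*y₂ + x₂*y₁) - a*b*y₁*y₂) * hD
      have hsq : (y₁ - 2*y₂) * (y₁ + 2*y₂) = 0 := by nlinarith [hpar]
      have h2y : a ∣ 2 * y₂ := by
        rcases mul_eq_zero.mp hsq with h | h
        · have h' : y₁ = 2 * y₂ := by linarith
          rwa [h'] at d1
        · have h' : y₁ = -(2 * y₂) := by linarith
          rw [h'] at d1; exact (dvd_neg).mp d1
      refine hle2 ?_
      rcases d2 with h | h
      · have := h2y.sub (h.mul_left 2)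
        rwa [show 2*y₂ - 2*(y₂ - 1) = 2 from by ring] at this
      · have := (h.mul_left 2).sub h2y
        rwa [show 2*(y₂ + 1) - 2*y₂ = 2 from by ring] at this
    · nlinarith [hI]
    · -- (b, a, b): a = 4b
      have ha4 : a = 4 * b := by nlinarith [hI]
      have hy1 : y₁ ≠ 0 := hy0 _ d1
      have hy2 : y₂ ≠ 0 := by
        rintro rfl
        have hx2 : x₂ = 0 := by
          rcases mul_eq_zero.mp (by linear_combination -hD : x₂ * y₁ = 0) with h | h
          · exact h
          · exact absurd h hy1
        rw [hx2] at e2; norm_num at e2; linarith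
      have hpar : y₂^2 * b = y₁^2 * a := by
        linear_combination (-(y₂^2)) * e1 + y₁^2 * e2 +
          (a*(x₁*y₂ + x₂*y₁) - a*b*y₁*y₂) * hD
      have hsq : (y₂ - 2*y₁) * (y₂ + 2*y₁) = 0 := by nlinarith [hpar]
      have h2y : a ∣ 2 * y₁ := by
        rcases mul_eq_zero.mp hsq with h | h
        · have h' : y₂ = 2 * y₁ := by linarith
          rwa [h'] at d2
        · have h' : y₂ = -(2 * y₁) := by linarith
          rw [h'] at d2; exact (dvd_neg).mp d2
      refine hle2 ?_
      rcases d1 with h | h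
      · have := h2y.sub (h.mul_left 2)
        rwa [show 2*y₁ - 2*(y₁ - 1) = 2 from by ring] at this
      · have := (h.mul_left 2).sub h2y
        rwa [show 2*(y₁ + 1) - 2*y₁ = 2 from by ring] at this
    · -- (b, b, a): a = 4b
      have ha4 : a = 4 * b := by nlinarith [hI]
      have hy1 : y₁ ≠ 0 := hy0 _ d1
      have hpar : y₂^2 * b = y₁^2 * b := by
        linear_combination (-(y₂^2)) * e1 + y₁^2 * e2 +
          (a*(x₁*y₂ + x₂*y₁) - a*b*y₁*y₂) * hD
      have hsq : (y₁ - y₂) * (y₁ + y₂) = 0 := by nlinarith [hpar]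
      rcases mul_eq_zero.mp hsq with h | h
      · have hy : y₂ = y₁ := by linarith
        have h2y : a ∣ 2 * y₁ := by
          have : y₁ + y₂ = 2 * y₁ := by rw [hy]; ring
          rwa [this] at d3
        refine hle2 ?_
        rcases d1 with h' | h'
        · have := h2y.sub (h'.mul_left 2)
          rwa [show 2*y₁ - 2*(y₁ - 1) = 2 from by ring] at this
        · have := (h'.mul_left 2).sub h2y
          rwa [show 2*(y₁ + 1) - 2*y₁ = 2 from by ring] at this
      · have hy : y₂ = -y₁ := by linarith
        have hy4 : y₁ + y₂ = 0 := by linarith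
        have hx : x₁ + x₂ = 0 := by
          have h0 : (x₁ + x₂) * y₁ = 0 := by linear_combination (-1) * hD + x₁ * hy
          rcases mul_eq_zero.mp h0 with h' | h'
          · exact h'
          · exact absurd h' hy1
        have h0a : (0:ℤ) = a := by
          linear_combination e3 - (a*(x₁+x₂) - a*b*(y₁+y₂)) * hx - b*(y₁+y₂) * hy4
        linarith
    · nlinarith [hI]
  · have hD2 : 1 ≤ (x₁*y₂ - x₂*y₁)^2 := by
      rcases lt_or_gt_of_ne hD with h | h <;> nlinarith
    have hab0 : (0:ℤ) < a*b := by nlinarith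
    have hab4 : (0:ℤ) < a*b - 4 := by nlinarith
    have hRge : a*b*(a*b-4) ≤ a*b*(a*b-4)*(x₁*y₂ - x₂*y₁)^2 := by
      nlinarith [mul_pos hab0 hab4]
    rcases hα with ⟨e1, -⟩ | ⟨e1, -⟩ <;> rcases hβ with ⟨e2, -⟩ | ⟨e2, -⟩ <;>
        rcases hγ with ⟨e3, -⟩ | ⟨e3, -⟩ <;> rw [e1, e2, e3] at hI <;>
      nlinarith [hI, hRge, mul_pos hab0 hab0, sq_nonneg (a*b), sq_nonneg (a-b),
        mul_pos (mul_pos (show (0:ℤ) < a by linarith) (show (0:ℤ) < a by linarith))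
          (show (0:ℤ) < b*b - 1 by nlinarith),
        mul_le_mul_of_nonneg_left hab (by linarith : (0:ℤ) ≤ b)]

theorem stmt_19 (a b : ℤ) (hab : a ≥ b) (hb : 1 < b) (h5 : a * b ≥ 5)
    (w₁ w₂ : (Matrix (Fin 2) (Fin 2) ℤ)ˣ)
    (h1 : (w₁ : Matrix (Fin 2) (Fin 2) ℤ) = !![-1, b; 0, 1])
    (h2 : (w₂ : Matrix (Fin 2) (Fin 2) ℤ) = !![1, 0; a, -1])
    (Δre : Set (Fin 2 → ℤ))
    (hΔ : Δre = {v | ∃ w ∈ Subgroup.closure {w₁, w₂},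
      v = (w : Matrix (Fin 2) (Fin 2) ℤ).mulVec ![1, 0] ∨
      v = (w : Matrix (Fin 2) (Fin 2) ℤ).mulVec ![0, 1]}) :
    ∀ α ∈ Δre, ∀ β ∈ Δre, α + β ∉ Δre := by
  have hw1inv : w₁⁻¹ = w₁ := by
    rw [inv_eq_iff_mul_eq_one]
    ext : 1
    rw [Units.val_mul, h1, Units.val_one, Matrix.one_fin_two, Matrix.mul_fin_two]
    norm_num
  have hw2inv : w₂⁻¹ = w₂ := by
    rw [inv_eq_iff_mul_eq_one]
    ext : 1
    rw [Units.val_mul, h2, Units.val_one, Matrix.one_fin_two, Matrix.mul_fin_two]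
    norm_num
  have hact1 : ∀ v : Fin 2 → ℤ, RL a b (v 0) (v 1) →
      RL a b (((w₁ : Matrix (Fin 2) (Fin 2) ℤ).mulVec v) 0)
             (((w₁ : Matrix (Fin 2) (Fin 2) ℤ).mulVec v) 1) := by
    intro v hv
    have h0 : ((w₁ : Matrix (Fin 2) (Fin 2) ℤ).mulVec v) 0 = b * v 1 - v 0 := by
      rw [h1]; simp [Matrix.mulVec, dotProduct, Fin.sum_univ_two]; ring
    have hh1 : ((w₁ : Matrix (Fin 2) (Fin 2) ℤ).mulVec v) 1 = v 1 := by
      rw [h1]; simp [Matrix.mulVec, dotProduct, Fin.sum_univ_two]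
    rw [h0, hh1]; exact hv.w1
  have hact2 : ∀ v : Fin 2 → ℤ, RL a b (v 0) (v 1) →
      RL a b (((w₂ : Matrix (Fin 2) (Fin 2) ℤ).mulVec v) 0)
             (((w₂ : Matrix (Fin 2) (Fin 2) ℤ).mulVec v) 1) := by
    intro v hv
    have h0 : ((w₂ : Matrix (Fin 2) (Fin 2) ℤ).mulVec v) 0 = v 0 := by
      rw [h2]; simp [Matrix.mulVec, dotProduct, Fin.sum_univ_two]
    have hh1 : ((w₂ : Matrix (Fin 2) (Fin 2) ℤ).mulVec v) 1 = a * v 0 - v 1 := by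
      rw [h2]; simp [Matrix.mulVec, dotProduct, Fin.sum_univ_two]; ring
    rw [h0, hh1]; exact hv.w2
  have hclosure : ∀ w ∈ Subgroup.closure {w₁, w₂}, ∀ v : Fin 2 → ℤ,
      RL a b (v 0) (v 1) →
      RL a b (((w : Matrix (Fin 2) (Fin 2) ℤ).mulVec v) 0)
             (((w : Matrix (Fin 2) (Fin 2) ℤ).mulVec v) 1) := by
    intro w hw
    have main : (∀ v : Fin 2 → ℤ, RL a b (v 0) (v 1) →
        RL a b (((w : Matrix (Fin 2) (Fin 2) ℤ).mulVec v) 0)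
               (((w : Matrix (Fin 2) (Fin 2) ℤ).mulVec v) 1)) ∧
        (∀ v : Fin 2 → ℤ, RL a b (v 0) (v 1) →
        RL a b ((((w⁻¹ : (Matrix (Fin 2) (Fin 2) ℤ)ˣ) : Matrix (Fin 2) (Fin 2) ℤ).mulVec v) 0)
               ((((w⁻¹ : (Matrix (Fin 2) (Fin 2) ℤ)ˣ) : Matrix (Fin 2) (Fin 2) ℤ).mulVec v) 1)) := by
      induction hw using Subgroup.closure_induction with
      | mem g hg =>
        rcases hg with rfl | rfl
        · exact ⟨hact1, by rw [hw1inv]; exact hact1⟩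
        · exact ⟨hact2, by rw [hw2inv]; exact hact2⟩
      | one =>
        constructor <;> · intro v hv; simpa [Matrix.one_mulVec] using hv
      | mul x y hx hy ihx ihy =>
        constructor
        · intro v hv
          have := ihx.1 ((y : Matrix (Fin 2) (Fin 2) ℤ).mulVec v) (ihy.1 v hv)
          simpa only [Units.val_mul, Matrix.mulVec_mulVec] using this
        · intro v hv
          have := ihy.2 (((x⁻¹ : (Matrix (Fin 2) (Fin 2) ℤ)ˣ) : Matrix (Fin 2) (Fin 2) ℤ).mulVec v) (ihx.2 v hv)
          rw [mul_inv_rev]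
          simpa only [Units.val_mul, Matrix.mulVec_mulVec] using this
      | inv x hx ihx =>
        exact ⟨ihx.2, by simpa using ihx.1⟩
    exact main.1
  subst hΔ
  rintro α ⟨wα, hwα, hα⟩ β ⟨wβ, hwβ, hβ⟩ ⟨wγ, hwγ, hγ⟩
  have base1 : RL a b ((![1, 0] : Fin 2 → ℤ) 0) ((![1, 0] : Fin 2 → ℤ) 1) := by
    left
    constructor
    · norm_num
    · norm_num
  have base2 : RL a b ((![0, 1] : Fin 2 → ℤ) 0) ((![0, 1] : Fin 2 → ℤ) 1) := by
    right
    constructor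
    · norm_num
    · left; norm_num
  have hRLα : RL a b (α 0) (α 1) := by
    rcases hα with rfl | rfl
    · exact hclosure wα hwα _ base1
    · exact hclosure wα hwα _ base2
  have hRLβ : RL a b (β 0) (β 1) := by
    rcases hβ with rfl | rfl
    · exact hclosure wβ hwβ _ base1
    · exact hclosure wβ hwβ _ base2
  have hRLγ : RL a b ((α + β) 0) ((α + β) 1) := by
    rcases hγ with h | h
    · rw [h]; exact hclosure wγ hwγ _ base1
    · rw [h]; exact hclosure wγ hwγ _ base2
  rw [Pi.add_apply, Pi.add_apply] at hRLγ
  exact rl_key a b hab hb h5 (α 0) (α 1) (β 0) (β 1) hRLα hRLβ hRLγ
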